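/- Let A be a densely defined closed operator on H, g ∈ ran A ∩ C^∞(A), and f ∈ D(A) with A f = g. If (A,g) satisfies the Krylov-core condition and f ∈ closure(K(A,g)), then the norm closure of A·K(A,g) equals the closure of K(A,g). -/

import Mathlib

/-- Lemma 4.4: let `A` be densely defined and closed, `g ∈ ran A ∩ C^∞(A)` (with orbit
`gs k = Aᵏ g`), and `f ∈ D(A)` with `A f = g`.  If the pair `(A,g)` satisfies the
Krylov-core condition (the closure of `A` restricted to `K(A,g)` is the restriction of `A`
to `closure(K(A,g)) ∩ D(A)`) and `f ∈ closure(K(A,g))`, then the norm closure of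
`A · K(A,g)` equals the closure of `K(A,g)`. -/
theorem stmt17 {H : Type*} [NormedAddCommGroup H] [InnerProductSpace ℂ H]
    [CompleteSpace H] (A : H →ₗ.[ℂ] H) (hA : Dense (A.domain : Set H))
    (hAc : A.IsClosed)
    (g : H) (gs : ℕ → H) (h0 : gs 0 = g)
    (horbit : ∀ k : ℕ, ∃ hk : gs k ∈ A.domain, A ⟨gs k, hk⟩ = gs (k + 1))
    (f : H) (hfdom : f ∈ A.domain) (hAf : A ⟨f, hfdom⟩ = g)
    (hcore : (A.domRestrict (Submodule.span ℂ (Set.range gs))).closure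
        = A.domRestrict (Submodule.span ℂ (Set.range gs)).topologicalClosure)
    (hfK : f ∈ (Submodule.span ℂ (Set.range gs)).topologicalClosure) :
    closure {y : H | ∃ x : H, ∃ hx : x ∈ A.domain,
        x ∈ Submodule.span ℂ (Set.range gs) ∧ A ⟨x, hx⟩ = y}
      = closure (Submodule.span ℂ (Set.range gs) : Set H) := by
  set K : Submodule ℂ H := Submodule.span ℂ (Set.range gs) with hK
  -- every element of K is in the domain and A maps it back into K
  have hmap : ∀ x ∈ K, ∃ hx : x ∈ A.domain, A ⟨x, hx⟩ ∈ K := by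
    intro x hx
    refine Submodule.span_induction ?_ ?_ ?_ ?_ hx
    · rintro y ⟨k, rfl⟩
      obtain ⟨hk, hAk⟩ := horbit k
      exact ⟨hk, hAk ▸ Submodule.subset_span ⟨k + 1, rfl⟩⟩
    · exact ⟨A.domain.zero_mem, by
        have : (⟨(0:H), A.domain.zero_mem⟩ : A.domain) = 0 := rfl
        rw [this, A.map_zero]; exact K.zero_mem⟩
    · rintro x y hxK hyK ⟨hx, hAx⟩ ⟨hy, hAy⟩
      refine ⟨A.domain.add_mem hx hy, ?_⟩
      have : (⟨x + y, A.domain.add_mem hx hy⟩ : A.domain) = ⟨x, hx⟩ + ⟨y, hy⟩ := rfl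
      rw [this, A.map_add]
      exact K.add_mem hAx hAy
    · rintro c x hxK ⟨hx, hAx⟩
      refine ⟨A.domain.smul_mem c hx, ?_⟩
      have : (⟨c • x, A.domain.smul_mem c hx⟩ : A.domain) = c • ⟨x, hx⟩ := rfl
      rw [this, A.map_smul]
      exact K.smul_mem c hAx
  -- the image set as a submodule
  set S : Submodule ℂ H :=
    { carrier := {y : H | ∃ x : H, ∃ hx : x ∈ A.domain, x ∈ K ∧ A ⟨x, hx⟩ = y}
      zero_mem' := ⟨0, A.domain.zero_mem, K.zero_mem, by
        have : (⟨(0:H), A.domain.zero_mem⟩ : A.domain) = 0 := rfl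
        rw [this, A.map_zero]⟩
      add_mem' := by
        rintro a b ⟨x, hx, hxK, rfl⟩ ⟨y, hy, hyK, rfl⟩
        refine ⟨x + y, A.domain.add_mem hx hy, K.add_mem hxK hyK, ?_⟩
        have : (⟨x + y, A.domain.add_mem hx hy⟩ : A.domain) = ⟨x, hx⟩ + ⟨y, hy⟩ := rfl
        rw [this, A.map_add]
      smul_mem' := by
        rintro c a ⟨x, hx, hxK, rfl⟩
        refine ⟨c • x, A.domain.smul_mem c hx, K.smul_mem c hxK, ?_⟩
        have : (⟨c • x, A.domain.smul_mem c hx⟩ : A.domain) = c • ⟨x, hx⟩ := rfl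
        rw [this, A.map_smul] } with hS
  show closure (S : Set H) = closure (K : Set H)
  -- S ⊆ K
  have hSK : (S : Set H) ⊆ (K : Set H) := by
    rintro y ⟨x, hx, hxK, rfl⟩
    obtain ⟨hx', hAx⟩ := hmap x hxK
    exact hAx
  -- g ∈ closure S via the core condition
  have hB : (A.domRestrict K).IsClosable :=
    hAc.isClosable.leIsClosable LinearPMap.domRestrict_le
  have hfdom2 : f ∈ (A.domRestrict K.topologicalClosure).domain := ⟨hfK, hfdom⟩
  have hval : A.domRestrict K.topologicalClosure ⟨f, hfdom2⟩ = g :=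
    (LinearPMap.domRestrict_apply (f := A)
      (x := (⟨f, hfdom2⟩ : ↥(K.topologicalClosure ⊓ A.domain))) (y := ⟨f, hfdom⟩) rfl).trans hAf
  have hg_mem : ((f, g) : H × H) ∈ (A.domRestrict K).graph.topologicalClosure := by
    rw [hB.graph_closure_eq_closure_graph, hcore]
    exact hval ▸ (A.domRestrict K.topologicalClosure).mem_graph ⟨f, hfdom2⟩
  have hgS : g ∈ closure (S : Set H) := by
    have h1 : ((f, g) : H × H) ∈ closure ((A.domRestrict K).graph : Set (H × H)) := hg_mem
    have h2 : Prod.snd '' ((A.domRestrict K).graph : Set (H × H)) ⊆ (S : Set H) := by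
      rintro y ⟨⟨x, y'⟩, hxy, rfl⟩
      rw [SetLike.mem_coe, LinearPMap.mem_graph_iff] at hxy
      obtain ⟨⟨z, hz⟩, hz1, hz2⟩ := hxy
      refine ⟨z, hz.2, hz.1, ?_⟩
      rw [← hz2]
      exact (LinearPMap.domRestrict_apply (f := A) (x := (⟨z, hz⟩ : ↥(K ⊓ A.domain)))
        (y := ⟨z, hz.2⟩) rfl).symm
    have h3 : g ∈ closure (Prod.snd '' ((A.domRestrict K).graph : Set (H × H))) :=
      image_closure_subset_closure_image continuous_snd ⟨(f, g), h1, rfl⟩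
    exact closure_mono h2 h3
  -- K ⊆ closure S
  have hKS : (K : Set H) ⊆ closure (S : Set H) := by
    have : K ≤ S.topologicalClosure := by
      rw [hK]
      refine Submodule.span_le.mpr ?_
      rintro y ⟨k, rfl⟩
      cases k with
      | zero => exact h0 ▸ hgS
      | succ k =>
        obtain ⟨hk, hAk⟩ := horbit k
        exact subset_closure ⟨gs k, hk, Submodule.subset_span ⟨k, rfl⟩, hAk⟩
    exact this
  exact le_antisymm (closure_mono hSK) (closure_minimal hKS isClosed_closure)
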